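/- Fix l ∈ ℕ, l ≥ 1, and let K_l : [0,∞) → [0,1] be the folding map defined by K_l(x) = lx − 2i for x ∈ [2i/l, (2i+1)/l] (i = 0,1,2,…) and K_l(x) = −lx + 2i for x ∈ [(2i−1)/l, 2i/l] (i = 1,2,…). Let p = Σ_{i=0}^{N} ρ_i·𝟙_{[i/l,(i+1)/l)} be a nonnegative rational step function of width 1/l on [0,∞) (ρ_i ≥ 0, N ∈ ℕ). Then the pushforward under K_l of the measure with density p equals ‖p‖_{L¹[0,∞)} times Lebesgue measure restricted to [0,1]; equivalently, the density of (K_l)_*(p·Lebesgue) is the constant ‖p‖_{L¹[0,∞)} on [0,1]. -/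

import Mathlib

open MeasureTheory

/-- The folding map `K_l : [0,∞) → [0,1]`, `K_l(x) = lx − 2i` on `[2i/l,(2i+1)/l]`
and `K_l(x) = −lx + 2i` on `[(2i−1)/l, 2i/l]`; equivalently
`K_l(x) = 1 − |((lx) mod 2) − 1|`. -/
noncomputable def foldMap (l : ℕ) (x : ℝ) : ℝ :=
  1 - |2 * Int.fract ((l : ℝ) * x / 2) - 1|



lemma foldMap_measurable (l : ℕ) : Measurable (foldMap l) := by
  unfold foldMap
  exact (measurable_const.sub
    (((measurable_const.mul ((measurable_const_mul _).div_const 2).fract).sub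
      measurable_const).abs))

lemma fract_eq_sub (m : ℤ) (y : ℝ) (h0 : (m : ℝ) ≤ y) (h1 : y < m + 1) :
    Int.fract y = y - m := by
  rw [← Int.fract_sub_intCast y m]
  exact Int.fract_eq_self.2 ⟨by linarith, by linarith⟩

lemma map_volume_affine {a : ℝ} (b : ℝ) (h : a ≠ 0) :
    Measure.map (fun x => a * x + b) volume = ENNReal.ofReal |a⁻¹| • volume := by
  have h1 : (fun x : ℝ => a * x + b) = (fun y => y + b) ∘ (fun x => a * x) := rfl
  rw [h1, ← Measure.map_map (measurable_add_const b) (measurable_const_mul a),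
    Real.map_volume_mul_left h, Measure.map_smul,
    (measurePreserving_add_right volume b).map_eq]

lemma foldMap_on_even (l m : ℕ) (x : ℝ) (h0 : 2 * (m : ℝ) ≤ (l : ℝ) * x)
    (h1 : (l : ℝ) * x < 2 * m + 1) : foldMap l x = (l : ℝ) * x - 2 * m := by
  have hf : Int.fract ((l : ℝ) * x / 2) = (l : ℝ) * x / 2 - (m : ℤ) := by
    apply fract_eq_sub <;> push_cast <;> linarith
  rw [foldMap, hf]
  rw [abs_of_nonpos (by push_cast; linarith)]
  push_cast; ring

lemma foldMap_on_odd (l m : ℕ) (x : ℝ) (h0 : 2 * (m : ℝ) + 1 ≤ (l : ℝ) * x)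
    (h1 : (l : ℝ) * x < 2 * m + 2) : foldMap l x = 2 * m + 2 - (l : ℝ) * x := by
  have hf : Int.fract ((l : ℝ) * x / 2) = (l : ℝ) * x / 2 - (m : ℤ) := by
    apply fract_eq_sub <;> push_cast <;> linarith
  rw [foldMap, hf]
  rw [abs_of_nonneg (by push_cast; linarith)]
  push_cast; ring

lemma piece (l : ℕ) (hl : 1 ≤ l) (i : ℕ) :
    (volume.restrict (Set.Ico ((i : ℝ) / l) (((i : ℝ) + 1) / l))).map (foldMap l)
      = ENNReal.ofReal ((l : ℝ)⁻¹) • volume.restrict (Set.Icc (0 : ℝ) 1) := by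
  have hl0 : (0 : ℝ) < l := by exact_mod_cast hl
  have hlne : (l : ℝ) ≠ 0 := ne_of_gt hl0
  rcases Nat.even_or_odd i with ⟨m, hm⟩ | ⟨m, hm⟩
  · -- i = m + m
    have hi : (i : ℝ) = 2 * m := by rw [hm]; push_cast; ring
    set g : ℝ → ℝ := fun x => (l : ℝ) * x + (-(i : ℝ)) with hg
    have hcongr : foldMap l =ᵐ[volume.restrict (Set.Ico ((i : ℝ) / l) (((i : ℝ) + 1) / l))] g := by
      refine (ae_restrict_iff' measurableSet_Ico).2 (ae_of_all _ fun x hx => ?_)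
      obtain ⟨hx1, hx2⟩ := hx
      rw [div_le_iff₀ hl0] at hx1
      rw [lt_div_iff₀ hl0] at hx2
      have he := foldMap_on_even l m x (by nlinarith) (by nlinarith)
      simp only [hg, he, hi]; ring
    have hpre : g ⁻¹' (Set.Ico (0 : ℝ) 1) = Set.Ico ((i : ℝ) / l) (((i : ℝ) + 1) / l) := by
      ext x
      simp only [Set.mem_preimage, Set.mem_Ico, hg]
      rw [div_le_iff₀ hl0, lt_div_iff₀ hl0]
      constructor <;> rintro ⟨h1, h2⟩ <;> constructor <;> nlinarith
    rw [Measure.map_congr hcongr, ← hpre,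
      ← Measure.restrict_map (by fun_prop) measurableSet_Ico,
      map_volume_affine _ hlne, Measure.restrict_smul,
      Measure.restrict_congr_set Ico_ae_eq_Icc, abs_of_nonneg (by positivity)]
  · -- i = 2m + 1
    have hi : (i : ℝ) = 2 * m + 1 := by rw [hm]; push_cast; ring
    set g : ℝ → ℝ := fun x => (-(l : ℝ)) * x + ((i : ℝ) + 1) with hg
    have hcongr : foldMap l =ᵐ[volume.restrict (Set.Ico ((i : ℝ) / l) (((i : ℝ) + 1) / l))] g := by
      refine (ae_restrict_iff' measurableSet_Ico).2 (ae_of_all _ fun x hx => ?_)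
      obtain ⟨hx1, hx2⟩ := hx
      rw [div_le_iff₀ hl0] at hx1
      rw [lt_div_iff₀ hl0] at hx2
      have he := foldMap_on_odd l m x (by nlinarith) (by nlinarith)
      simp only [hg, he, hi]; ring
    have hpre : g ⁻¹' (Set.Ioc (0 : ℝ) 1) = Set.Ico ((i : ℝ) / l) (((i : ℝ) + 1) / l) := by
      ext x
      simp only [Set.mem_preimage, Set.mem_Ioc, Set.mem_Ico, hg]
      rw [div_le_iff₀ hl0, lt_div_iff₀ hl0]
      constructor <;> rintro ⟨h1, h2⟩ <;> constructor <;> nlinarith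
    have habs : |(-(l : ℝ))⁻¹| = (l : ℝ)⁻¹ := by
      rw [abs_inv, abs_neg, abs_of_nonneg hl0.le]
    rw [Measure.map_congr hcongr, ← hpre,
      ← Measure.restrict_map (by fun_prop) measurableSet_Ioc,
      map_volume_affine _ (neg_ne_zero.mpr hlne), Measure.restrict_smul,
      Measure.restrict_congr_set Ioc_ae_eq_Icc, habs]

/-- For `l ≥ 1` and a nonnegative rational step function `p` of width
`1/l` on `[0,∞)`, the pushforward under `K_l` of the measure with density `p` is
`‖p‖_{L¹[0,∞)}` times Lebesgue measure restricted to `[0,1]`. -/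
theorem foldMap_pushforward_of_step
    (l : ℕ) (hl : 1 ≤ l) (N : ℕ) (ρ : ℕ → ℝ) (hρ : ∀ i, 0 ≤ ρ i)
    (p : ℝ → ℝ)
    (hp : p = fun x => ∑ i ∈ Finset.range (N + 1),
      Set.indicator (Set.Ico ((i : ℝ) / l) (((i : ℝ) + 1) / l)) (fun _ => ρ i) x) :
    (volume.withDensity (fun x => ENNReal.ofReal (p x))).map (foldMap l)
      = ENNReal.ofReal (∫ x in Set.Ici (0 : ℝ), p x) •
          volume.restrict (Set.Icc (0 : ℝ) 1) := by
  have hl0 : (0 : ℝ) < l := by exact_mod_cast hl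
  -- the density as a finite sum of ℝ≥0∞-valued indicators
  have hdens : (fun x => ENNReal.ofReal (p x))
      = ∑ i ∈ Finset.range (N + 1),
          Set.indicator (Set.Ico ((i : ℝ) / l) (((i : ℝ) + 1) / l))
            (fun _ => ENNReal.ofReal (ρ i)) := by
    funext x
    rw [hp]
    rw [Finset.sum_apply]
    rw [ENNReal.ofReal_sum_of_nonneg (fun i _ => Set.indicator_nonneg (fun _ _ => hρ i) x)]
    refine Finset.sum_congr rfl fun i _ => ?_
    by_cases h : x ∈ Set.Ico ((i : ℝ) / l) (((i : ℝ) + 1) / l) <;>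
      simp [Set.indicator_of_mem, Set.indicator_of_notMem, h]
  -- withDensity of a finite sum
  have hwd : volume.withDensity (fun x => ENNReal.ofReal (p x))
      = ∑ i ∈ Finset.range (N + 1),
          ENNReal.ofReal (ρ i) • volume.restrict (Set.Ico ((i : ℝ) / l) (((i : ℝ) + 1) / l)) := by
    rw [hdens]
    classical
    induction (Finset.range (N + 1)) using Finset.induction with
    | empty => simp
    | insert _ _ hnot ih =>
      rw [Finset.sum_insert hnot, Finset.sum_insert hnot,
        withDensity_add_left ((measurable_const (a := ENNReal.ofReal (ρ _))).indicator
          measurableSet_Ico), ih,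
        withDensity_indicator measurableSet_Ico, withDensity_const]
  rw [hwd]
  -- map of a finite sum of measures
  have hmap : (∑ i ∈ Finset.range (N + 1),
        ENNReal.ofReal (ρ i) • volume.restrict (Set.Ico ((i : ℝ) / l) (((i : ℝ) + 1) / l))).map
          (foldMap l)
      = ∑ i ∈ Finset.range (N + 1),
          (ENNReal.ofReal (ρ i) •
            ((volume.restrict (Set.Ico ((i : ℝ) / l) (((i : ℝ) + 1) / l))).map (foldMap l))) := by
    classical
    induction (Finset.range (N + 1)) using Finset.induction with
    | empty => simp
    | insert _ _ hnot ih =>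
      rw [Finset.sum_insert hnot, Finset.sum_insert hnot,
        Measure.map_add _ _ (foldMap_measurable l), ih, Measure.map_smul]
  rw [hmap]
  have hintegral : ∫ x in Set.Ici (0 : ℝ), p x
      = ∑ i ∈ Finset.range (N + 1), ρ i * (l : ℝ)⁻¹ := by
    rw [hp]
    rw [integral_finset_sum _ (fun i _ => by
      rw [integrable_indicator_iff measurableSet_Ico]
      exact integrableOn_const (lt_of_le_of_lt (Measure.restrict_le_self _)
        (by rw [Real.volume_Ico]; exact ENNReal.ofReal_lt_top)).ne  )]
    refine Finset.sum_congr rfl fun i _ => ?_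
    rw [integral_indicator measurableSet_Ico, Measure.restrict_restrict measurableSet_Ico]
    have hsub : Set.Ico ((i : ℝ) / l) (((i : ℝ) + 1) / l) ∩ Set.Ici 0
        = Set.Ico ((i : ℝ) / l) (((i : ℝ) + 1) / l) := by
      refine Set.inter_eq_self_of_subset_left fun x hx => ?_
      have : (0 : ℝ) ≤ (i : ℝ) / l := by positivity
      exact le_trans this hx.1
    rw [hsub, setIntegral_const, measureReal_def, Real.volume_Ico, smul_eq_mul, mul_comm]
    congr 1
    rw [ENNReal.toReal_ofReal (by rw [div_sub_div_same, add_sub_cancel_left]; positivity)]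
    field_simp
    ring
  rw [hintegral,
    ENNReal.ofReal_sum_of_nonneg (fun i _ => mul_nonneg (hρ i) (by positivity)),
    Finset.sum_smul]
  refine Finset.sum_congr rfl fun i hi => ?_
  rw [piece l hl i, smul_smul, ← ENNReal.ofReal_mul (hρ i)]
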